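/- Fix real numbers r and ϑ with 0 < r < √((√5 − 1)/2) and 0 < ϑ < 1, and define g(d) = (r/√(1 − r²))^d · (√(1 + 2ϑ(1 − r²)^{d/2}/r^{2d}) − 1) for positive integers d. Then g(d) is asymptotically equivalent to √(2ϑ)/(1 − r²)^{d/4} as d → ∞, i.e., g(d)·(1 − r²)^{d/4}/√(2ϑ) → 1 as d → ∞. -/

import Mathlib

open Filter

private lemma aux_sqrt_ratio_limit :
    Tendsto (fun t : ℝ => Real.sqrt t / (Real.sqrt (1 + t) + 1)) atTop (nhds 1) := by
  have ha : Tendsto (fun t : ℝ => 1 + 1 / t) atTop (nhds 1) := by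
    have := tendsto_const_nhds.add tendsto_inv_atTop_zero (f := fun _ : ℝ => (1:ℝ))
    simpa [one_div] using this
  have hsq : Tendsto (fun t : ℝ => Real.sqrt (1 + 1 / t)) atTop (nhds 1) := by
    have := (Real.continuous_sqrt.continuousAt (x := (1:ℝ))).tendsto.comp ha
    simpa [Function.comp_def] using this
  have hsqrt_top : Tendsto Real.sqrt atTop atTop :=
    (tendsto_rpow_atTop one_half_pos).congr fun x => (Real.sqrt_eq_rpow x).symm
  have hinv : Tendsto (fun t : ℝ => 1 / Real.sqrt t) atTop (nhds 0) := by
    have := tendsto_inv_atTop_zero.comp hsqrt_top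
    simpa [one_div, Function.comp_def] using this
  have h1 : Tendsto (fun t : ℝ => Real.sqrt (1 + 1 / t) + 1 / Real.sqrt t) atTop (nhds 1) := by
    simpa using hsq.add hinv
  have h2 := (h1.inv₀ one_ne_zero)
  rw [inv_one] at h2
  refine h2.congr' ?_
  filter_upwards [eventually_gt_atTop (0:ℝ)] with t ht
  have hst : 0 < Real.sqrt t := Real.sqrt_pos.mpr ht
  have hdiv : Real.sqrt (1 + 1 / t) = Real.sqrt (1 + t) / Real.sqrt t := by
    rw [show 1 + 1 / t = (1 + t) / t by field_simp; ring, Real.sqrt_div (by linarith)]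
  rw [hdiv, ← add_div, inv_div]

theorem gorban_tyukin_bound_asymp_small_r
    (r ϑ : ℝ) (hr0 : 0 < r) (hr1 : r < Real.sqrt ((Real.sqrt 5 - 1) / 2))
    (hϑ0 : 0 < ϑ) (hϑ1 : ϑ < 1) :
    Tendsto (fun d : ℕ =>
        ((r / Real.sqrt (1 - r ^ 2)) ^ d *
            (Real.sqrt (1 + 2 * ϑ * (1 - r ^ 2) ^ ((d : ℝ) / 2) / r ^ (2 * d)) - 1)) *
          (1 - r ^ 2) ^ ((d : ℝ) / 4) / Real.sqrt (2 * ϑ))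
      atTop (nhds 1) := by
  have hs5 : Real.sqrt 5 ^ 2 = 5 := Real.sq_sqrt (by norm_num)
  have hs5pos : (0:ℝ) < Real.sqrt 5 := Real.sqrt_pos.mpr (by norm_num)
  have hr2lt : r ^ 2 < (Real.sqrt 5 - 1) / 2 := (Real.lt_sqrt hr0.le).mp hr1
  have hkey : r ^ 4 + r ^ 2 < 1 := by nlinarith [sq_nonneg (r ^ 2), sq_nonneg r]
  have hr2 : r ^ 2 < 1 := by nlinarith [pow_pos hr0 4]
  set c : ℝ := 1 - r ^ 2 with hc_def
  have hc : 0 < c := by simp only [hc_def]; linarith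
  have hr4c : r ^ 4 < c := by simp only [hc_def]; linarith
  -- the inner quantity
  set T : ℕ → ℝ := fun d => 2 * ϑ * c ^ ((d : ℝ) / 2) / r ^ (2 * d) with hT_def
  have hcdh : ∀ d : ℕ, c ^ ((d : ℝ) / 2) = (Real.sqrt c) ^ d := by
    intro d
    rw [Real.sqrt_eq_rpow, ← Real.rpow_natCast (c ^ ((1:ℝ)/2)) d, ← Real.rpow_mul hc.le]
    ring_nf
  have hbase : 1 < Real.sqrt c / r ^ 2 := by
    rw [lt_div_iff₀ (by positivity), one_mul]
    rw [show Real.sqrt c = c ^ ((1:ℝ)/2) from Real.sqrt_eq_rpow c] at *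
    rw [← Real.sqrt_eq_rpow]
    exact (Real.lt_sqrt (by positivity)).mpr (by nlinarith)
  have hT_top : Tendsto T atTop atTop := by
    have heq : ∀ d : ℕ, T d = 2 * ϑ * (Real.sqrt c / r ^ 2) ^ d := by
      intro d
      rw [hT_def]
      simp only
      rw [hcdh d, div_pow, pow_mul, mul_div_assoc]
    have hpow : Tendsto (fun d : ℕ => (Real.sqrt c / r ^ 2) ^ d) atTop atTop :=
      tendsto_pow_atTop_atTop_of_one_lt hbase
    have := hpow.const_mul_atTop (by linarith : (0:ℝ) < 2 * ϑ)
    exact Tendsto.congr (fun d => (heq d).symm) this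
  refine (aux_sqrt_ratio_limit.comp hT_top).congr (fun d => ?_)
  -- pointwise identity
  simp only [Function.comp]
  set t : ℝ := T d with ht_def
  have hA : (0:ℝ) < c ^ ((d : ℝ) / 4) := Real.rpow_pos_of_pos hc _
  have hB : (0:ℝ) < r ^ d := pow_pos hr0 d
  have hS : (0:ℝ) < Real.sqrt (2 * ϑ) := Real.sqrt_pos.mpr (by linarith)
  have ht : 0 < t := by
    rw [ht_def, hT_def]
    positivity
  have hU : 1 ≤ Real.sqrt (1 + t) := by
    rw [show (1:ℝ) = Real.sqrt 1 by simp]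
    exact Real.sqrt_le_sqrt (by simpa using by linarith)
  have hU2 : Real.sqrt (1 + t) ^ 2 = 1 + t := Real.sq_sqrt (by linarith)
  have hc2 : c ^ ((d : ℝ) / 2) = (c ^ ((d : ℝ) / 4)) ^ 2 := by
    rw [← Real.rpow_natCast (c ^ ((d:ℝ)/4)) 2, ← Real.rpow_mul hc.le]
    congr 1
    ring
  have hr2d : r ^ (2 * d) = (r ^ d) ^ 2 := by rw [mul_comm, pow_mul]
  have hrc : (r / Real.sqrt c) ^ d = r ^ d / c ^ ((d : ℝ) / 2) := by
    rw [div_pow, hcdh d]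
  have hT_eq : t = Real.sqrt (2 * ϑ) ^ 2 * (c ^ ((d:ℝ)/4)) ^ 2 / (r ^ d) ^ 2 := by
    rw [ht_def, hT_def]
    simp only
    rw [hc2, hr2d, Real.sq_sqrt (by linarith : (0:ℝ) ≤ 2 * ϑ)]
  have hsqrt_t : Real.sqrt t = Real.sqrt (2 * ϑ) * c ^ ((d:ℝ)/4) / r ^ d := by
    rw [hT_eq, show Real.sqrt (2*ϑ) ^ 2 * (c ^ ((d:ℝ)/4)) ^ 2 / (r ^ d) ^ 2
        = (Real.sqrt (2*ϑ) * c ^ ((d:ℝ)/4) / r ^ d) ^ 2 by ring,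
      Real.sqrt_sq (by positivity)]
  show Real.sqrt t / (Real.sqrt (1 + t) + 1)
      = (r / Real.sqrt c) ^ d * (Real.sqrt (1 + t) - 1) * c ^ ((d:ℝ)/4) / Real.sqrt (2 * ϑ)
  rw [hsqrt_t, hrc, hc2]
  set A := c ^ ((d:ℝ)/4)
  set B := r ^ d
  set S := Real.sqrt (2 * ϑ)
  set U := Real.sqrt (1 + t)
  have hUpos : 0 < U + 1 := by dsimp only [U]; linarith
  have hU2' : U ^ 2 = 1 + S ^ 2 * A ^ 2 / B ^ 2 := by rw [hU2, hT_eq]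
  have hU2'' : U ^ 2 * B ^ 2 = B ^ 2 + S ^ 2 * A ^ 2 := by
    rw [hU2']
    field_simp
  field_simp
  linear_combination (-1 : ℝ) * hU2''
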